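/- Assume in addition 0 < s < 1. Then there exists a constant C > 0 depending only on s and q such that for every μ ≥ 0 and all θ₁, θ₂ ∈ ℝ with θ₁ ≠ θ₂ one has (ψ_μ(θ₁) − ψ_μ(θ₂))·(θ₁ − θ₂) ≥ C·|θ₁ − θ₂|^((s+1)/s) / (μ^(1/s) + |ψ_μ(θ₁)|^((q−s)/s) + |ψ_μ(θ₂)|^((q−s)/s)). -/

import Mathlib

open Real

noncomputable def g (s q μ ζ : ℝ) : ℝ := μ * |ζ| ^ (s - 1) * ζ + |ζ| ^ (q - 1) * ζ

noncomputable def h (p a : ℝ) : ℝ := |a| ^ (p - 1) * a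

lemma h_of_nonneg {p a : ℝ} (hp : 0 < p) (ha : 0 ≤ a) : h p a = a ^ p := by
  rcases ha.eq_or_lt with rfl | ha'
  · simp [h, Real.zero_rpow hp.ne']
  · rw [h, abs_of_pos ha', ← Real.rpow_add_one ha'.ne', sub_add_cancel]

lemma h_neg (p a : ℝ) : h p (-a) = - h p a := by
  simp only [h, abs_neg]; ring

lemma h_strictMono {p : ℝ} (hp : 0 < p) : StrictMono (h p) := by
  have key : ∀ a b : ℝ, 0 ≤ a → a < b → h p a < h p b := by
    intro a b ha hab
    rw [h_of_nonneg hp ha, h_of_nonneg hp (ha.trans hab.le)]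
    exact Real.rpow_lt_rpow ha hab hp
  intro a b hab
  rcases le_or_gt 0 a with ha | ha
  · exact key a b ha hab
  · rcases le_or_gt 0 b with hb | hb
    · have h1 : h p a < 0 := by
        have h2 : (0:ℝ) < h p (-a) := by
          rw [h_of_nonneg hp (by linarith)]
          exact Real.rpow_pos_of_pos (by linarith) p
        rw [h_neg] at h2; linarith
      have h3 : 0 ≤ h p b := by
        rw [h_of_nonneg hp hb]; exact Real.rpow_nonneg hb p
      linarith
    · have := key (-b) (-a) (by linarith) (by linarith)
      rw [h_neg, h_neg] at this; linarith

lemma rpow_sub_le_sub_rpow {x y s : ℝ} (hy : 0 ≤ y) (hxy : y ≤ x) (hs0 : 0 ≤ s) (hs1 : s ≤ 1) :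
    x ^ s - y ^ s ≤ (x - y) ^ s := by
  have h := NNReal.rpow_add_le_add_rpow ((x - y).toNNReal) (y.toNNReal) hs0 hs1
  have h2 := (NNReal.coe_le_coe).2 h
  push_cast at h2
  rw [Real.coe_toNNReal _ (by linarith), Real.coe_toNNReal _ hy, sub_add_cancel] at h2
  linarith

lemma rpow_diff_le {r x y : ℝ} (hr : 1 ≤ r) (hy : 0 ≤ y) (hxy : y ≤ x) :
    x ^ r - y ^ r ≤ r * x ^ (r - 1) * (x - y) := by
  have hx : 0 ≤ x := hy.trans hxy
  rcases hx.eq_or_lt with rfl | hx'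
  · have : y = 0 := le_antisymm hxy hy
    subst this
    simp
  · have hB := one_add_mul_self_le_rpow_one_add (s := y / x - 1)
      (by have : 0 ≤ y / x := div_nonneg hy hx; linarith) hr
    have hyx : 1 + (y / x - 1) = y / x := by ring
    rw [hyx] at hB
    have hdiv : (y / x) ^ r = y ^ r / x ^ r := Real.div_rpow hy hx r
    rw [hdiv] at hB
    have hxr : (0:ℝ) < x ^ r := Real.rpow_pos_of_pos hx' r
    have hB2 : (1 + r * (y / x - 1)) * x ^ r ≤ y ^ r := by
      calc (1 + r * (y / x - 1)) * x ^ r ≤ (y ^ r / x ^ r) * x ^ r := by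
            apply mul_le_mul_of_nonneg_right hB hxr.le
        _ = y ^ r := by field_simp
    have hxr1 : x ^ r = x ^ (r - 1) * x := by
      rw [← Real.rpow_add_one hx'.ne' (r - 1), sub_add_cancel]
    have key : (y / x - 1) * x ^ r = x ^ (r - 1) * (y - x) := by
      rw [hxr1]; field_simp
    have key2 : x ^ (r - 1) * (y - x) = -(x ^ (r - 1) * (x - y)) := by ring
    nlinarith [hB2, key, key2]

lemma abs_sub_le_of_ordered {f : ℝ → ℝ} {R : ℝ → ℝ → ℝ} (hmono : Monotone f)
    (hodd : ∀ a, f (-a) = - f a) (hRsymm : ∀ a b, R a b = R b a)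
    (hRneg : ∀ a b, R (-a) (-b) = R a b) (hRnonneg : ∀ a b, 0 ≤ R a b)
    (hord : ∀ a b, |b| ≤ a → f a - f b ≤ R a b) : ∀ a b, |f a - f b| ≤ R a b := by
  have one_sided : ∀ a b, f a - f b ≤ R a b := by
    intro a b
    rcases le_or_gt a b with hab | hab
    · have := hmono hab
      linarith [hRnonneg a b]
    · rcases le_or_gt (|b|) a with ho | ho
      · exact hord a b ho
      · have hb0 : b < 0 := by
          by_contra hb
          push_neg at hb
          rw [abs_of_nonneg hb] at ho; linarith
        have hba : |(-a)| ≤ -b := by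
          rw [abs_of_neg hb0] at ho
          rw [abs_neg, abs_le]
          constructor <;> linarith
        have := hord (-b) (-a) hba
        rw [hodd, hodd, hRneg b a, hRsymm b a] at this
        linarith
  intro a b
  rw [abs_sub_le_iff]
  exact ⟨one_sided a b, by rw [hRsymm] at *; exact one_sided b a⟩

lemma hq_bound {s q : ℝ} (hs : 0 < s) (hs1 : s < 1) (hsq : s < q) :
    ∀ a b : ℝ, |h q a - h q b| ≤ 2 * q / s * |a - b| ^ s * (|a| ^ (q - s) + |b| ^ (q - s)) := by
  have hq0 : (0:ℝ) < q := hs.trans hsq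
  apply abs_sub_le_of_ordered (h_strictMono hq0).monotone (h_neg q)
  · intro a b; rw [abs_sub_comm]; ring
  · intro a b
    have e : -a - -b = -(a - b) := by ring
    rw [e, abs_neg, abs_neg, abs_neg]
  · intro a b; positivity
  · intro a b hba
    have ha : 0 ≤ a := (abs_nonneg b).trans hba
    have hb_le : b ≤ a := (le_abs_self b).trans hba
    have hnb : -b ≤ a := (neg_le_abs b).trans hba
    have habs : |a - b| = a - b := abs_of_nonneg (by linarith)
    have haa : |a| = a := abs_of_nonneg ha
    rw [habs, haa]
    rcases le_or_gt 0 b with hb | hb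
    · rw [h_of_nonneg hq0 ha, h_of_nonneg hq0 hb, abs_of_nonneg hb]
      have hr : (1:ℝ) ≤ q / s := (one_le_div hs).2 hsq.le
      have hbs : b ^ s ≤ a ^ s := Real.rpow_le_rpow hb hb_le hs.le
      have step1 := rpow_diff_le hr (Real.rpow_nonneg hb s) hbs
      have e1 : (a ^ s) ^ (q / s) = a ^ q := by
        rw [← Real.rpow_mul ha]; congr 1; field_simp
      have e2 : (b ^ s) ^ (q / s) = b ^ q := by
        rw [← Real.rpow_mul hb]; congr 1; field_simp
      have e3 : (a ^ s) ^ (q / s - 1) = a ^ (q - s) := by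
        rw [← Real.rpow_mul ha]; congr 1; field_simp
      rw [e1, e2, e3] at step1
      have step2 : a ^ s - b ^ s ≤ (a - b) ^ s :=
        rpow_sub_le_sub_rpow hb hb_le hs.le hs1.le
      have hX : 0 ≤ a ^ (q - s) := Real.rpow_nonneg ha _
      have hY : 0 ≤ b ^ (q - s) := Real.rpow_nonneg hb _
      have hZ : 0 ≤ (a - b) ^ s := Real.rpow_nonneg (by linarith) _
      have hqs : 0 < q / s := by positivity
      have step3 : q / s * a ^ (q - s) * (a ^ s - b ^ s) ≤ q / s * a ^ (q - s) * (a - b) ^ s :=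
        mul_le_mul_of_nonneg_left step2 (by positivity)
      have hfin : 0 ≤ q / s * ((a - b) ^ s * (a ^ (q - s) + 2 * b ^ (q - s))) := by positivity
      have expand : 2 * q / s * (a - b) ^ s * (a ^ (q - s) + b ^ (q - s)) =
          q / s * a ^ (q - s) * (a - b) ^ s +
          q / s * ((a - b) ^ s * (a ^ (q - s) + 2 * b ^ (q - s))) := by ring
      linarith [step1, step3]
    · have hb' : h q b = -((-b) ^ q) := by
        have := h_neg q (-b)
        rw [neg_neg] at this
        rw [← h_of_nonneg hq0 (by linarith : (0:ℝ) ≤ -b)]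
        linarith [this]
      rw [h_of_nonneg hq0 ha, hb', abs_of_neg hb]
      have h1 : (-b) ^ q ≤ a ^ q := Real.rpow_le_rpow (by linarith) hnb hq0.le
      have h2 : a ^ q = a ^ (q - s) * a ^ s := by
        rw [← Real.rpow_add' ha (by rw [sub_add_cancel]; exact hq0.ne'), sub_add_cancel]
      have h3 : a ^ s ≤ (a - b) ^ s := Real.rpow_le_rpow ha (by linarith) hs.le
      have hX : 0 ≤ a ^ (q - s) := Real.rpow_nonneg ha _
      have hY : 0 ≤ (-b) ^ (q - s) := Real.rpow_nonneg (by linarith) _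
      have hZ : 0 ≤ (a - b) ^ s := Real.rpow_nonneg (by linarith) _
      have hr2 : (2:ℝ) ≤ 2 * q / s := by
        rw [mul_div_assoc]
        nlinarith [(one_le_div hs).2 hsq.le]
      have h4 : a ^ (q - s) * a ^ s ≤ a ^ (q - s) * (a - b) ^ s :=
        mul_le_mul_of_nonneg_left h3 hX
      have hfin : 0 ≤ (2 * q / s - 2) * ((a - b) ^ s * a ^ (q - s)) := by
        apply mul_nonneg (by linarith) (by positivity)
      have hfin2 : 0 ≤ 2 * q / s * ((a - b) ^ s * (-b) ^ (q - s)) := by positivity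
      have expand : 2 * q / s * (a - b) ^ s * (a ^ (q - s) + (-b) ^ (q - s)) =
          2 * (a ^ (q - s) * (a - b) ^ s) +
          (2 * q / s - 2) * ((a - b) ^ s * a ^ (q - s)) +
          2 * q / s * ((a - b) ^ s * (-b) ^ (q - s)) := by ring
      linarith [h1, h4, h2]

lemma hs_bound {s : ℝ} (hs : 0 < s) (hs1 : s < 1) :
    ∀ a b : ℝ, |h s a - h s b| ≤ 2 * |a - b| ^ s := by
  apply abs_sub_le_of_ordered (h_strictMono hs).monotone (h_neg s)
  · intro a b; rw [abs_sub_comm]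
  · intro a b
    have e : -a - -b = -(a - b) := by ring
    rw [e, abs_neg]
  · intro a b; positivity
  · intro a b hba
    have ha : 0 ≤ a := (abs_nonneg b).trans hba
    have hb_le : b ≤ a := (le_abs_self b).trans hba
    have hnb : -b ≤ a := (neg_le_abs b).trans hba
    have habs : |a - b| = a - b := abs_of_nonneg (by linarith)
    rw [habs]
    have hZ : 0 ≤ (a - b) ^ s := Real.rpow_nonneg (by linarith) _
    rcases le_or_gt 0 b with hb | hb
    · rw [h_of_nonneg hs ha, h_of_nonneg hs hb]
      have step2 : a ^ s - b ^ s ≤ (a - b) ^ s :=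
        rpow_sub_le_sub_rpow hb hb_le hs.le hs1.le
      linarith
    · have hb' : h s b = -((-b) ^ s) := by
        have := h_neg s (-b)
        rw [neg_neg] at this
        rw [← h_of_nonneg hs (by linarith : (0:ℝ) ≤ -b)]
        linarith [this]
      rw [h_of_nonneg hs ha, hb']
      have h1 : (-b) ^ s ≤ a ^ s := Real.rpow_le_rpow (by linarith) hnb hs.le
      have h3 : a ^ s ≤ (a - b) ^ s := Real.rpow_le_rpow ha (by linarith) hs.le
      linarith


theorem stmt_17 (s q : ℝ) (hs : 0 < s) (hs1 : s < 1) (hsq : s < q)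
    (ψ : ℝ → ℝ → ℝ)
    (hψ_right : ∀ μ : ℝ, 0 ≤ μ → ∀ θ : ℝ, g s q μ (ψ μ θ) = θ)
    (hψ_left : ∀ μ : ℝ, 0 ≤ μ → ∀ ζ : ℝ, ψ μ (g s q μ ζ) = ζ) :
    ∃ C : ℝ, 0 < C ∧ ∀ μ : ℝ, 0 ≤ μ → ∀ θ₁ θ₂ : ℝ, θ₁ ≠ θ₂ →
      (ψ μ θ₁ - ψ μ θ₂) * (θ₁ - θ₂) ≥
        C * |θ₁ - θ₂| ^ ((s + 1) / s) /
          (μ ^ (1 / s) + |ψ μ θ₁| ^ ((q - s) / s) + |ψ μ θ₂| ^ ((q - s) / s)) := by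
  have hq0 : (0:ℝ) < q := hs.trans hsq
  set M : ℝ := 6 * q / s with hMdef
  have hM : (0:ℝ) < M := by rw [hMdef]; positivity
  have hMs : 0 < M ^ (1/s) := Real.rpow_pos_of_pos hM _
  refine ⟨(M ^ (1/s))⁻¹, inv_pos.2 hMs, ?_⟩
  intro μ hμ θ₁ θ₂ hθ
  set a := ψ μ θ₁ with hadef
  set b := ψ μ θ₂ with hbdef
  have hga : g s q μ a = θ₁ := hψ_right μ hμ θ₁
  have hgb : g s q μ b = θ₂ := hψ_right μ hμ θ₂
  have hg_eq : ∀ ζ : ℝ, g s q μ ζ = μ * h s ζ + h q ζ := by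
    intro ζ; simp only [g, h]; ring
  have hab : a ≠ b := by
    intro hcont; apply hθ; rw [← hga, ← hgb, hcont]
  have hGmono : StrictMono (g s q μ) := by
    intro x y hxy
    rw [hg_eq, hg_eq]
    have h1 : h s x ≤ h s y := (h_strictMono hs).monotone hxy.le
    have h2 : h q x < h q y := h_strictMono hq0 hxy
    have h3 := mul_le_mul_of_nonneg_left h1 hμ
    linarith
  have hprod : (a - b) * (θ₁ - θ₂) = |a - b| * |θ₁ - θ₂| := by
    rw [← hga, ← hgb]
    rcases lt_trichotomy a b with hc | hc | hc
    · have h2 := hGmono hc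
      rw [abs_of_neg (sub_neg.2 hc), abs_of_neg (sub_neg.2 h2)]; ring
    · exact absurd hc hab
    · have h2 := hGmono hc
      rw [abs_of_pos (sub_pos.2 hc), abs_of_pos (sub_pos.2 h2)]
  set Δζ := |a - b| with hΔζdef
  set Δθ := |θ₁ - θ₂| with hΔθdef
  have hΔζ : 0 < Δζ := abs_pos.2 (sub_ne_zero.2 hab)
  have hΔθ : 0 < Δθ := abs_pos.2 (sub_ne_zero.2 hθ)
  set D := μ ^ (1/s) + |a| ^ ((q-s)/s) + |b| ^ ((q-s)/s) with hDdef
  have hD1 : 0 ≤ μ ^ (1/s) := Real.rpow_nonneg hμ _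
  have hD2 : 0 ≤ |a| ^ ((q-s)/s) := Real.rpow_nonneg (abs_nonneg a) _
  have hD3 : 0 ≤ |b| ^ ((q-s)/s) := Real.rpow_nonneg (abs_nonneg b) _
  have hD : 0 < D := by
    have hor : a ≠ 0 ∨ b ≠ 0 := by
      by_contra hc; push_neg at hc; exact hab (hc.1.trans hc.2.symm)
    rcases hor with hA | hA
    · have : 0 < |a| ^ ((q-s)/s) := Real.rpow_pos_of_pos (abs_pos.2 hA) _
      rw [hDdef]; linarith
    · have : 0 < |b| ^ ((q-s)/s) := Real.rpow_pos_of_pos (abs_pos.2 hA) _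
      rw [hDdef]; linarith
  -- each piece of E is ≤ D ^ s
  have hμD : μ ≤ D ^ s := by
    have h1 : μ ^ (1/s) ≤ D := by rw [hDdef]; linarith
    have h2 := Real.rpow_le_rpow (Real.rpow_nonneg hμ _) h1 hs.le
    have e : (μ ^ (1/s)) ^ s = μ := by
      rw [← Real.rpow_mul hμ, one_div, inv_mul_cancel₀ hs.ne', Real.rpow_one]
    rwa [e] at h2
  have haD : |a| ^ (q - s) ≤ D ^ s := by
    have h1 : |a| ^ ((q-s)/s) ≤ D := by rw [hDdef]; linarith
    have h2 := Real.rpow_le_rpow (Real.rpow_nonneg (abs_nonneg a) _) h1 hs.le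
    have e : (|a| ^ ((q-s)/s)) ^ s = |a| ^ (q - s) := by
      rw [← Real.rpow_mul (abs_nonneg a), div_mul_cancel₀ _ hs.ne']
    rwa [e] at h2
  have hbD : |b| ^ (q - s) ≤ D ^ s := by
    have h1 : |b| ^ ((q-s)/s) ≤ D := by rw [hDdef]; linarith
    have h2 := Real.rpow_le_rpow (Real.rpow_nonneg (abs_nonneg b) _) h1 hs.le
    have e : (|b| ^ ((q-s)/s)) ^ s = |b| ^ (q - s) := by
      rw [← Real.rpow_mul (abs_nonneg b), div_mul_cancel₀ _ hs.ne']
    rwa [e] at h2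
  -- key estimate
  have hhs := hs_bound hs hs1 a b
  have hhq := hq_bound hs hs1 hsq a b
  have hZ : 0 ≤ Δζ ^ s := Real.rpow_nonneg hΔζ.le _
  have habs1 : Δθ ≤ μ * |h s a - h s b| + |h q a - h q b| := by
    calc Δθ = |(μ * h s a + h q a) - (μ * h s b + h q b)| := by
          rw [hΔθdef, ← hga, ← hgb, hg_eq, hg_eq]
      _ = |μ * (h s a - h s b) + (h q a - h q b)| := by ring_nf
      _ ≤ |μ * (h s a - h s b)| + |h q a - h q b| := abs_add_le _ _
      _ = μ * |h s a - h s b| + |h q a - h q b| := by rw [abs_mul, abs_of_nonneg hμ]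
  have h2qs : (2:ℝ) ≤ 2 * q / s := by
    rw [mul_div_assoc]
    nlinarith [(one_le_div hs).2 hsq.le]
  have key : Δθ ≤ M * Δζ ^ s * D ^ s := by
    have t1 : μ * |h s a - h s b| ≤ μ * (2 * Δζ ^ s) := mul_le_mul_of_nonneg_left hhs hμ
    have t2 : μ * (2 * Δζ ^ s) ≤ 2 * q / s * Δζ ^ s * μ := by
      nlinarith [mul_nonneg hZ hμ]
    have hsum : μ + |a| ^ (q-s) + |b| ^ (q-s) ≤ 3 * D ^ s := by linarith
    have t4 : 2 * q / s * Δζ ^ s * (μ + |a| ^ (q-s) + |b| ^ (q-s)) ≤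
        2 * q / s * Δζ ^ s * (3 * D ^ s) :=
      mul_le_mul_of_nonneg_left hsum (by positivity)
    have e : 2 * q / s * Δζ ^ s * (3 * D ^ s) = M * Δζ ^ s * D ^ s := by
      rw [hMdef]; ring
    have expand : 2 * q / s * Δζ ^ s * (μ + |a| ^ (q-s) + |b| ^ (q-s)) =
        2 * q / s * Δζ ^ s * μ + 2 * q / s * Δζ ^ s * (|a| ^ (q-s) + |b| ^ (q-s)) := by ring
    linarith [habs1, t1, t2, hhq, t4]
  -- conclude
  have hstep : Δθ ^ (1/s) ≤ M ^ (1/s) * Δζ * D := by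
    have h1 : Δθ ^ (1/s) ≤ (M * Δζ ^ s * D ^ s) ^ (1/s) :=
      Real.rpow_le_rpow hΔθ.le key (by positivity)
    have eζ : (Δζ ^ s) ^ (1/s) = Δζ := by
      rw [← Real.rpow_mul hΔζ.le, mul_one_div, div_self hs.ne', Real.rpow_one]
    have eD : (D ^ s) ^ (1/s) = D := by
      rw [← Real.rpow_mul hD.le, mul_one_div, div_self hs.ne', Real.rpow_one]
    have h2 : (M * Δζ ^ s * D ^ s) ^ (1/s) = M ^ (1/s) * Δζ * D := by
      rw [Real.mul_rpow (by positivity) (Real.rpow_nonneg hD.le s),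
        Real.mul_rpow hM.le (Real.rpow_nonneg hΔζ.le s), eζ, eD]
    rw [h2] at h1; exact h1
  rw [ge_iff_le, hprod, div_le_iff₀ hD]
  have esplit : Δθ ^ ((s+1)/s) = Δθ * Δθ ^ (1/s) := by
    have e : (s+1)/s = 1 + 1/s := by field_simp
    rw [e, Real.rpow_add hΔθ, Real.rpow_one]
  rw [esplit]
  calc (M ^ (1/s))⁻¹ * (Δθ * Δθ ^ (1/s)) ≤ (M ^ (1/s))⁻¹ * (Δθ * (M ^ (1/s) * Δζ * D)) := by
        apply mul_le_mul_of_nonneg_left _ (inv_nonneg.2 hMs.le)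
        exact mul_le_mul_of_nonneg_left hstep hΔθ.le
    _ = Δζ * Δθ * D := by field_simp
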